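/- Let δ ∈ (0,1), K ≥ 2, and ℓ_K = Σ_{k=1}^K 1/k. For a selection size s ∈ [1,K], the inequality log(2/δ) + log(2K/(δs)) ≤ 2·sqrt( log(2/δ)·log(2Kℓ_K/(δs)) ) holds if and only if log s ∈ [ log K − 2·sqrt(log(2/δ)·log ℓ_K), log K + 2·sqrt(log(2/δ)·log ℓ_K) ]. Consequently, since s ≤ K, the inequality holds iff s ≥ K / exp(2·sqrt(log(2/δ)·log ℓ_K)). -/
import Mathlib


/-- Comparison of the Hoeffding e-CI (used with e-BY at level `δ s / K`) and the
standard Hoeffding CI (used with BY at level `δ s /(K ℓ_K)`): for `s ∈ [1,K]`,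
`log(2/δ) + log(2K/(δs)) ≤ 2√(log(2/δ)·log(2Kℓ_K/(δs)))` holds iff
`log s ∈ [log K − 2√(log(2/δ)·log ℓ_K), log K + 2√(log(2/δ)·log ℓ_K)]`, and
(since `s ≤ K`) iff `s ≥ K / exp(2√(log(2/δ)·log ℓ_K))`. -/
theorem hoeffding_eCI_comparison (K : ℕ) (hK : 2 ≤ K)
    (δ : ℝ) (hδ0 : 0 < δ) (hδ1 : δ < 1)
    (lK : ℝ) (hlK : lK = ∑ k ∈ Finset.range K, (1 : ℝ) / (k + 1))
    (s : ℝ) (hs1 : 1 ≤ s) (hsK : s ≤ K) :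
    (Real.log (2 / δ) + Real.log (2 * K / (δ * s)) ≤
        2 * Real.sqrt (Real.log (2 / δ) * Real.log (2 * K * lK / (δ * s)))
      ↔ Real.log s ∈ Set.Icc
          (Real.log K - 2 * Real.sqrt (Real.log (2 / δ) * Real.log lK))
          (Real.log K + 2 * Real.sqrt (Real.log (2 / δ) * Real.log lK))) ∧
    (Real.log (2 / δ) + Real.log (2 * K / (δ * s)) ≤
        2 * Real.sqrt (Real.log (2 / δ) * Real.log (2 * K * lK / (δ * s)))
      ↔ (K : ℝ) / Real.exp (2 * Real.sqrt (Real.log (2 / δ) * Real.log lK)) ≤ s) := by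
  have hs0 : (0:ℝ) < s := lt_of_lt_of_le one_pos hs1
  have hK0 : (0:ℝ) < K := by
    have : (2:ℝ) ≤ K := by exact_mod_cast hK
    linarith
  have hlK32 : (3:ℝ)/2 ≤ lK := by
    have hsub : Finset.range 2 ⊆ Finset.range K := Finset.range_subset_range.2 hK
    have h2 : ∑ k ∈ Finset.range 2, (1 : ℝ) / (k + 1) ≤
        ∑ k ∈ Finset.range K, (1 : ℝ) / (k + 1) := by
      apply Finset.sum_le_sum_of_subset_of_nonneg hsub
      intro i _ _; positivity
    rw [hlK]
    have : ∑ k ∈ Finset.range 2, (1 : ℝ) / (k + 1) = 3/2 := by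
      simp [Finset.sum_range_succ]; norm_num
    linarith
  have hlK0 : (0:ℝ) < lK := by linarith
  have hL : 0 < Real.log (2/δ) := Real.log_pos (by rw [lt_div_iff₀ hδ0]; linarith)
  have hc : 0 < Real.log lK := Real.log_pos (by linarith)
  set L := Real.log (2/δ) with hLdef
  set c := Real.log lK with hcdef
  have hlogs : Real.log s ≤ Real.log K := Real.log_le_log hs0 hsK
  set A := Real.log K - Real.log s with hAdef
  have hA0 : 0 ≤ A := by simp [hAdef]; linarith
  have hLexp : L = Real.log 2 - Real.log δ := Real.log_div two_ne_zero (ne_of_gt hδ0)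
  have hA : Real.log (2*K/(δ*s)) = L + A := by
    rw [Real.log_div (by positivity) (by positivity), Real.log_mul two_ne_zero (ne_of_gt hK0),
      Real.log_mul (ne_of_gt hδ0) (ne_of_gt hs0), hLexp, hAdef]
    ring
  have hB : Real.log (2*K*lK/(δ*s)) = L + A + c := by
    rw [Real.log_div (by positivity) (by positivity),
      Real.log_mul (by positivity) (ne_of_gt hlK0), Real.log_mul two_ne_zero (ne_of_gt hK0),
      Real.log_mul (ne_of_gt hδ0) (ne_of_gt hs0), hLexp, hAdef, hcdef]
    ring
  -- key equivalence
  have hkey : (L + Real.log (2*K/(δ*s)) ≤ 2 * Real.sqrt (L * Real.log (2*K*lK/(δ*s))))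
      ↔ A ≤ 2 * Real.sqrt (L * c) := by
    rw [hA, hB]
    have gen : ∀ x : ℝ, (2:ℝ) * Real.sqrt x = Real.sqrt (4 * x) := by
      intro x
      rw [show (4:ℝ) * x = 2^2 * x by ring, Real.sqrt_mul (by norm_num),
        Real.sqrt_sq (by norm_num)]
    rw [gen, gen, Real.le_sqrt (by linarith) (by positivity),
      Real.le_sqrt hA0 (by positivity)]
    constructor <;> intro h <;> nlinarith [h]
  have hIcc : (A ≤ 2 * Real.sqrt (L * c)) ↔ Real.log s ∈ Set.Icc
      (Real.log K - 2 * Real.sqrt (L * c)) (Real.log K + 2 * Real.sqrt (L * c)) := by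
    have hsq : 0 ≤ 2 * Real.sqrt (L * c) := by positivity
    constructor
    · intro h
      constructor
      · simp only [hAdef] at h; linarith
      · linarith
    · intro h
      have := h.1
      simp only [hAdef]; linarith
  have hdiv : (A ≤ 2 * Real.sqrt (L * c)) ↔
      (K : ℝ) / Real.exp (2 * Real.sqrt (L * c)) ≤ s := by
    rw [div_le_iff₀ (Real.exp_pos _)]
    rw [← Real.log_le_log_iff hK0 (by positivity),
      Real.log_mul (ne_of_gt hs0) (ne_of_gt (Real.exp_pos _)), Real.log_exp]
    simp only [hAdef]
    constructor <;> intro h <;> linarith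
  exact ⟨hkey.trans hIcc, hkey.trans hdiv⟩
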